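/- arXiv:2202.11582 — 3 statements merged into one kernel-verified Lean document; each statement's English description precedes it below -/
import Mathlib

section
/- Let l ≥ 1 and let δ be a submodular function on subsets of [l] with values in ℤ such that δ([l]) ≥ 1, and let δ'(I) = min(δ(I), δ([l]) − 1) for I ≠ ∅ with δ'(∅) = 0. Then the truncation of the polymatroid 𝒫(δ), namely 𝒫(δ)_T = {α − e_j : α ∈ 𝒫(δ), j ∈ [l], α_j ≥ 1}, equals the polymatroid 𝒫(δ'); in particular, the truncation of a polymatroid is a polymatroid. -/
/-- The truncation `𝒫(δ)_T = {α − e_j : α ∈ 𝒫(δ), j ∈ [l], α_j ≥ 1}`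
of the polymatroid `𝒫(δ)` equals the polymatroid `𝒫(δ')` of the truncated
submodular function `δ'(I) = min(δ(I), δ([l]) − 1)` (for `I ≠ ∅`, `δ'(∅) = 0`). -/
theorem truncation_polymatroid (l : ℕ) (hl : 1 ≤ l) (δ : Finset (Fin l) → ℤ)
    (hempty : δ ∅ = 0)
    (hmono : ∀ I J : Finset (Fin l), I ⊆ J → δ I ≤ δ J)
    (hsub : ∀ I J : Finset (Fin l), δ (I ∪ J) + δ (I ∩ J) ≤ δ I + δ J)
    (h1 : 1 ≤ δ Finset.univ)
    (δ' : Finset (Fin l) → ℤ)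
    (hδ' : ∀ I : Finset (Fin l),
      δ' I = if I = ∅ then 0 else min (δ I) (δ Finset.univ - 1)) :
    {β : Fin l → ℕ | ∃ α : Fin l → ℕ,
        (∀ I : Finset (Fin l), ∑ i ∈ I, (α i : ℤ) ≤ δ I) ∧
        ∃ j : Fin l, 1 ≤ α j ∧ ∀ i : Fin l, β i = α i - (if i = j then 1 else 0)} =
    {β : Fin l → ℕ | ∀ I : Finset (Fin l), ∑ i ∈ I, (β i : ℤ) ≤ δ' I} := by
  haveI : Nonempty (Fin l) := ⟨⟨0, hl⟩⟩
  ext β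
  simp only [Set.mem_setOf_eq]
  constructor
  · rintro ⟨α, hα, j, hj, hβ⟩
    have hcast : ∀ i, (β i : ℤ) = (α i : ℤ) - (if i = j then 1 else 0) := by
      intro i
      have h1 := hβ i
      split_ifs at h1 ⊢ with h
      · subst h; omega
      · omega
    have hsum : ∀ I : Finset (Fin l),
        ∑ i ∈ I, (β i : ℤ) = ∑ i ∈ I, (α i : ℤ) - (if j ∈ I then 1 else 0) := by
      intro I
      simp only [hcast, Finset.sum_sub_distrib, Finset.sum_ite_eq']
    intro I
    rw [hδ']
    split_ifs with hI
    · subst hI; simp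
    · refine le_min ?_ ?_
      · rw [hsum]
        have := hα I
        split_ifs <;> linarith
      · by_cases hjI : j ∈ I
        · rw [hsum]
          simp only [hjI, if_pos]
          have h2 := hα I
          have h3 := hmono I Finset.univ (Finset.subset_univ I)
          linarith
        · rw [hsum]
          simp only [hjI, if_neg, not_false_iff]
          have h2 := hα (insert j I)
          rw [Finset.sum_insert hjI] at h2
          have h3 := hmono (insert j I) Finset.univ (Finset.subset_univ _)
          have h4 : (1 : ℤ) ≤ (α j : ℤ) := by exact_mod_cast hj
          simp only [sub_zero]
          linarith
  · intro hβ
    have hβδ : ∀ I : Finset (Fin l), ∑ i ∈ I, (β i : ℤ) ≤ δ I := by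
      intro I
      rcases eq_or_ne I ∅ with h | h
      · subst h; simp [hempty]
      · have h2 := hβ I
        rw [hδ', if_neg h] at h2
        exact h2.trans (min_le_left _ _)
    set S : Finset (Finset (Fin l)) :=
      Finset.univ.filter (fun I => δ I ≤ ∑ i ∈ I, (β i : ℤ)) with hS
    set T : Finset (Fin l) := S.sup id with hT
    have hTtight : δ T ≤ ∑ i ∈ T, (β i : ℤ) := by
      rw [hT]
      apply Finset.sup_induction (p := fun J => δ J ≤ ∑ i ∈ J, (β i : ℤ))
      · simp [hempty]
      · intro a ha b hb
        have h2 := hsub a b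
        have h3 := hβδ (a ∩ b)
        have h4 : ∑ i ∈ a ∪ b, (β i : ℤ) + ∑ i ∈ a ∩ b, (β i : ℤ)
            = ∑ i ∈ a, (β i : ℤ) + ∑ i ∈ b, (β i : ℤ) :=
          Finset.sum_union_inter
        show δ (a ⊔ b) ≤ ∑ i ∈ a ⊔ b, (β i : ℤ)
        have : a ⊔ b = a ∪ b := rfl
        rw [this]
        linarith
      · intro I hI
        exact (Finset.mem_filter.mp hI).2
    have hTne : T ≠ Finset.univ := by
      intro h
      have h2 := hβ Finset.univ
      rw [hδ', if_neg (Finset.univ_nonempty.ne_empty)] at h2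
      have h3 := h2.trans (min_le_right _ _)
      rw [h] at hTtight
      linarith
    obtain ⟨j, hjT⟩ : ∃ j, j ∉ T := by
      by_contra h
      push_neg at h
      exact hTne (Finset.eq_univ_iff_forall.mpr h)
    have hstrict : ∀ I : Finset (Fin l), j ∈ I → ∑ i ∈ I, (β i : ℤ) + 1 ≤ δ I := by
      intro I hjI
      by_contra h
      push_neg at h
      have hIS : I ∈ S := Finset.mem_filter.mpr ⟨Finset.mem_univ _, by linarith⟩
      exact hjT (Finset.le_sup (f := id) hIS hjI)
    refine ⟨fun i => β i + (if i = j then 1 else 0), ?_, j, by simp, ?_⟩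
    · intro I
      have hsum : ∑ i ∈ I, ((β i + if i = j then 1 else 0 : ℕ) : ℤ)
          = ∑ i ∈ I, (β i : ℤ) + (if j ∈ I then 1 else 0) := by
        push_cast
        rw [Finset.sum_add_distrib, Finset.sum_ite_eq']
      rw [hsum]
      by_cases hjI : j ∈ I
      · simp only [hjI, if_pos]
        exact hstrict I hjI
      · simp only [hjI, if_neg, not_false_iff, add_zero]
        exact hβδ I
    · intro i
      split_ifs with h <;> simp [h]
end

section
/- Let l ≥ 1, let δ be a submodular function on subsets of [l] with values in ℤ, and let α ∈ 𝒫(δ) satisfy Σ_{i∈[l]} α_i < δ([l]). Then there exists an index j ∈ [l] such that α + e_j ∈ 𝒫(δ), i.e. Σ_{i∈I} α_i + (1 if j ∈ I else 0) ≤ δ(I) for every I ⊆ [l]. -/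
/-- If `α ∈ 𝒫(δ)` and `Σ_i α_i < δ([l])`, then `α + e_j ∈ 𝒫(δ)`
for some index `j`. -/
theorem polymatroid_augmentation (l : ℕ) (hl : 1 ≤ l) (δ : Finset (Fin l) → ℤ)
    (hempty : δ ∅ = 0)
    (hmono : ∀ I J : Finset (Fin l), I ⊆ J → δ I ≤ δ J)
    (hsub : ∀ I J : Finset (Fin l), δ (I ∪ J) + δ (I ∩ J) ≤ δ I + δ J)
    (α : Fin l → ℕ)
    (hα : ∀ I : Finset (Fin l), ∑ i ∈ I, (α i : ℤ) ≤ δ I)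
    (hlt : ∑ i : Fin l, (α i : ℤ) < δ Finset.univ) :
    ∃ j : Fin l, ∀ I : Finset (Fin l),
      (∑ i ∈ I, (α i : ℤ)) + (if j ∈ I then 1 else 0) ≤ δ I := by
  classical
  set S := Finset.univ.powerset.filter
    (fun I : Finset (Fin l) => ∑ i ∈ I, (α i : ℤ) = δ I) with hS
  set T := S.sup id with hT
  have hTtight : ∑ i ∈ T, (α i : ℤ) = δ T := by
    rw [hT]
    apply Finset.sup_induction (p := fun I : Finset (Fin l) => ∑ i ∈ I, (α i : ℤ) = δ I)
    · simpa using hempty.symm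
    · intro A hA B hB
      have h1 := hsub A B
      have h2 := hα (A ∩ B)
      have h3 := hα (A ∪ B)
      have h4 : ∑ i ∈ A ∪ B, (α i : ℤ) + ∑ i ∈ A ∩ B, (α i : ℤ)
          = ∑ i ∈ A, (α i : ℤ) + ∑ i ∈ B, (α i : ℤ) :=
        Finset.sum_union_inter
      show ∑ i ∈ A ∪ B, (α i : ℤ) = δ (A ∪ B)
      linarith
    · intro I hI
      exact (Finset.mem_filter.mp hI).2
  have hTne : T ≠ Finset.univ := by
    intro h
    rw [h] at hTtight
    omega
  obtain ⟨j, _, hjT⟩ := Finset.exists_of_ssubset (Finset.ssubset_univ_iff.mpr hTne)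
  refine ⟨j, fun I => ?_⟩
  by_cases hj : j ∈ I
  · simp only [hj, if_pos]
    have hne : ∑ i ∈ I, (α i : ℤ) ≠ δ I := by
      intro h
      have hIS : I ∈ S := by
        rw [hS]
        exact Finset.mem_filter.mpr ⟨Finset.mem_powerset.mpr (Finset.subset_univ I), h⟩
      have : I ⊆ T := Finset.le_sup (f := id) hIS
      exact hjT (this hj)
    have := hα I
    omega
  · simp only [hj, if_neg, if_false]
    simpa using hα I
end

section
/- Let l ≥ 1, let δ be a submodular function on subsets of [l] with values in ℤ, and let c ∈ ℕ^l satisfy Σ_{i∈I} c_i ≤ δ(I) + 1 for every I ⊆ [l] and Σ_{i∈[l]} c_i ≤ δ([l]). Then there exists an index j ∈ [l] such that for every I ⊆ [l] with j ∈ I one has Σ_{i∈I} c_i ≤ δ(I). -/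
/-- If `Σ_{i∈I} c_i ≤ δ(I) + 1` for all `I` and
`Σ_{i∈[l]} c_i ≤ δ([l])`, then there is an index `j` such that every set
containing `j` satisfies the strict inequality `Σ_{i∈I} c_i ≤ δ(I)`. -/
theorem exists_good_index (l : ℕ) (hl : 1 ≤ l) (δ : Finset (Fin l) → ℤ)
    (hempty : δ ∅ = 0)
    (hmono : ∀ I J : Finset (Fin l), I ⊆ J → δ I ≤ δ J)
    (hsub : ∀ I J : Finset (Fin l), δ (I ∪ J) + δ (I ∩ J) ≤ δ I + δ J)
    (c : Fin l → ℕ)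
    (hc : ∀ I : Finset (Fin l), ∑ i ∈ I, (c i : ℤ) ≤ δ I + 1)
    (htotal : ∑ i : Fin l, (c i : ℤ) ≤ δ Finset.univ) :
    ∃ j : Fin l, ∀ I : Finset (Fin l), j ∈ I → ∑ i ∈ I, (c i : ℤ) ≤ δ I := by
  classical
  set Tight : Finset (Fin l) → Prop := fun I => ∑ i ∈ I, (c i : ℤ) = δ I + 1 with hT
  have hclosed : ∀ I J, Tight I → Tight J → Tight (I ⊔ J) := by
    intro I J hI hJ
    have hsum : ∑ i ∈ I ∪ J, (c i : ℤ) + ∑ i ∈ I ∩ J, (c i : ℤ)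
        = ∑ i ∈ I, (c i : ℤ) + ∑ i ∈ J, (c i : ℤ) := Finset.sum_union_inter
    have h1 := hc (I ∪ J)
    have h2 := hc (I ∩ J)
    have h3 := hsub I J
    simp only [hT] at hI hJ ⊢
    have : ∑ i ∈ I ∪ J, (c i : ℤ) = δ (I ∪ J) + 1 := by linarith
    simpa using this
  set S : Finset (Finset (Fin l)) := Finset.univ.filter Tight with hS
  by_cases hne : S.Nonempty
  · set T : Finset (Fin l) := S.sup' hne id with hTdef
    have hTtight : Tight T := by
      apply Finset.sup'_induction hne id (fun a ha b hb => hclosed a b ha hb)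
      intro b hb
      simpa [hS] using (Finset.mem_filter.mp hb).2
    have hTne : T ≠ Finset.univ := by
      intro h
      have := hTtight
      rw [h] at this
      simp only [hT] at this
      omega
    obtain ⟨j, hj⟩ : ∃ j, j ∉ T := by
      by_contra h
      push_neg at h
      exact hTne (Finset.eq_univ_iff_forall.mpr h)
    refine ⟨j, fun I hjI => ?_⟩
    by_contra h
    push_neg at h
    have hIt : Tight I := by
      have := hc I
      simp only [hT]
      omega
    have hIS : I ∈ S := Finset.mem_filter.mpr ⟨Finset.mem_univ _, hIt⟩
    have : I ⊆ T := Finset.le_sup' id hIS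
    exact hj (this hjI)
  · refine ⟨⟨0, hl⟩, fun I _ => ?_⟩
    by_contra h
    push_neg at h
    have hIt : Tight I := by
      have := hc I
      simp only [hT]
      omega
    exact hne ⟨I, Finset.mem_filter.mpr ⟨Finset.mem_univ _, hIt⟩⟩
end
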